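/- Let r ≥ 1 and let P be an exchangeable probability mass function on (Fin 6)^r. Then there exists a linear functional L : B_r → ℝ on the space B_r of real polynomials in θ₁,…,θ₅ of total degree at most r such that (i) for every g ∈ B_r and every c ∈ ℝ with g − c ∈ B_r⁺, one has L(g) ≥ c, and (ii) for every t : Fin r → Fin 6, P(t) = L(∏_{i=1}^{5} θ_i^{n_i(t)} · (1 − θ₁ − ⋯ − θ₅)^{n_6(t)}), where n_i(t) is the number of indices k with t(k) = i. -/

import Mathlib

open MvPolynomial

/-- The Bernstein basis polynomial of exponent vector `n`. -/
noncomputable def bernPoly (n : Fin 6 → ℕ) : MvPolynomial (Fin 5) ℝ :=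
  (∏ i : Fin 5, (X i : MvPolynomial (Fin 5) ℝ) ^ n i.castSucc) *
    (1 - ∑ i : Fin 5, (X i : MvPolynomial (Fin 5) ℝ)) ^ n (Fin.last 5)

lemma totalDegree_bernstein_le (n : Fin 6 → ℕ) :
    (bernPoly n).totalDegree ≤ ∑ i, n i := by
  classical
  have hX : ∀ i : Fin 5, ((X i : MvPolynomial (Fin 5) ℝ) ^ n i.castSucc).totalDegree
      ≤ n i.castSucc := by
    intro i
    calc ((X i : MvPolynomial (Fin 5) ℝ) ^ n i.castSucc).totalDegree
        ≤ n i.castSucc * (X i : MvPolynomial (Fin 5) ℝ).totalDegree :=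
          totalDegree_pow _ _
      _ = n i.castSucc := by rw [totalDegree_X, mul_one]
  have h1 : (∏ i : Fin 5, (X i : MvPolynomial (Fin 5) ℝ) ^ n i.castSucc).totalDegree
      ≤ ∑ i : Fin 5, n i.castSucc :=
    le_trans (totalDegree_finset_prod _ _) (Finset.sum_le_sum fun i _ => hX i)
  have hsum : (∑ i : Fin 5, (X i : MvPolynomial (Fin 5) ℝ)).totalDegree ≤ 1 := by
    refine le_trans (totalDegree_finset_sum _ _) ?_
    exact Finset.sup_le fun i _ => by rw [totalDegree_X]
  have h2 : ((1 : MvPolynomial (Fin 5) ℝ) - ∑ i : Fin 5, X i).totalDegree ≤ 1 := by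
    refine le_trans (totalDegree_sub _ _) ?_
    simp only [totalDegree_one, sup_le_iff]
    exact ⟨Nat.zero_le 1, hsum⟩
  have h3 : (((1 : MvPolynomial (Fin 5) ℝ) - ∑ i : Fin 5, X i) ^ n (Fin.last 5)).totalDegree
      ≤ n (Fin.last 5) := by
    calc (((1 : MvPolynomial (Fin 5) ℝ) - ∑ i : Fin 5, X i) ^ n (Fin.last 5)).totalDegree
        ≤ n (Fin.last 5) * ((1 : MvPolynomial (Fin 5) ℝ) - ∑ i : Fin 5, X i).totalDegree :=
          totalDegree_pow _ _
      _ ≤ n (Fin.last 5) * 1 := Nat.mul_le_mul_left _ h2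
      _ = n (Fin.last 5) := mul_one _
  calc (bernPoly n).totalDegree
      ≤ (∏ i : Fin 5, (X i : MvPolynomial (Fin 5) ℝ) ^ n i.castSucc).totalDegree +
        (((1 : MvPolynomial (Fin 5) ℝ) - ∑ i : Fin 5, X i) ^ n (Fin.last 5)).totalDegree :=
        totalDegree_mul _ _
    _ ≤ (∑ i : Fin 5, n i.castSucc) + n (Fin.last 5) := Nat.add_le_add h1 h3
    _ = ∑ i : Fin 6, n i := (Fin.sum_univ_castSucc n).symm

/-- The count vector of a sequence of `r` die rolls. -/
def countVec {r : ℕ} (t : Fin r → Fin 6) : Fin 6 → ℕ :=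
  fun i => (Finset.univ.filter fun k => t k = i).card

lemma sum_countVec {r : ℕ} (t : Fin r → Fin 6) : ∑ i, countVec t i = r := by
  classical
  have := Finset.card_eq_sum_card_fiberwise
    (f := t) (s := Finset.univ) (t := Finset.univ) (fun x _ => Finset.mem_univ _)
  simpa [countVec] using this.symm

lemma bernPoly_countVec_mem {r : ℕ} (t : Fin r → Fin 6) :
    bernPoly (countVec t) ∈ restrictTotalDegree (Fin 5) ℝ r := by
  rw [mem_restrictTotalDegree]
  calc (bernPoly (countVec t)).totalDegree ≤ ∑ i, countVec t i :=
        totalDegree_bernstein_le _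
    _ = r := sum_countVec t

/-- The Bernstein cone `B_r⁺`: nonnegative combinations of degree-`r`
Bernstein basis polynomials. -/
noncomputable def bernCone (r : ℕ) : Set (MvPolynomial (Fin 5) ℝ) :=
  {g | ∃ u : (Fin 6 → ℕ) → ℝ, (∀ n, 0 ≤ u n) ∧
        g = ∑ n ∈ Finset.Nat.antidiagonalTuple 6 r, u n • bernPoly n}

/-! ### Auxiliary machinery -/

/-- The six "basic" polynomials `θ₁,…,θ₅, 1-θ₁-⋯-θ₅`. -/
noncomputable def yb : Fin 6 → MvPolynomial (Fin 5) ℝ :=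
  Fin.lastCases (1 - ∑ i : Fin 5, (X i : MvPolynomial (Fin 5) ℝ)) (fun i => X i)

lemma yb_castSucc (i : Fin 5) : yb i.castSucc = X i := Fin.lastCases_castSucc ..
lemma yb_last : yb (Fin.last 5) = 1 - ∑ i : Fin 5, (X i : MvPolynomial (Fin 5) ℝ) :=
  Fin.lastCases_last ..

lemma sum_yb : ∑ j, yb j = 1 := by
  rw [Fin.sum_univ_castSucc]
  rw [yb_last]; simp [yb_castSucc]

lemma bernPoly_eq_prod (n : Fin 6 → ℕ) : bernPoly n = ∏ j, yb j ^ n j := by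
  rw [Fin.prod_univ_castSucc]
  rw [yb_last]; simp [bernPoly, yb_castSucc]

lemma prod_comp_countVec {r : ℕ} {M : Type*} [CommMonoid M] (y : Fin 6 → M)
    (t : Fin r → Fin 6) : ∏ k, y (t k) = ∏ j, y j ^ countVec t j := by
  classical
  rw [← Finset.prod_fiberwise' Finset.univ t y]
  exact Finset.prod_congr rfl fun j _ => Finset.prod_const _

lemma bernPoly_countVec_eq {r : ℕ} (t : Fin r → Fin 6) :
    bernPoly (countVec t) = ∏ k, yb (t k) := by
  rw [bernPoly_eq_prod, prod_comp_countVec]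

lemma one_eq_sum_bern (r : ℕ) :
    (1 : MvPolynomial (Fin 5) ℝ) = ∑ t : Fin r → Fin 6, bernPoly (countVec t) := by
  simp_rw [bernPoly_countVec_eq]
  rw [← Fintype.prod_sum (f := fun (_ : Fin r) j => yb j)]
  simp [sum_yb]

lemma card_fiber {r : ℕ} (t : Fin r → Fin 6) (j : Fin 6) :
    Fintype.card {k // t k = j} = countVec t j := by
  simp [countVec, Fintype.card_subtype]

lemma exists_perm_of_countVec_eq {r : ℕ} (t t' : Fin r → Fin 6)
    (h : countVec t = countVec t') : ∃ σ : Equiv.Perm (Fin r), t ∘ σ = t' := by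
  classical
  have e : ∀ j : Fin 6, {k // t' k = j} ≃ {k // t k = j} := fun j =>
    Fintype.equivOfCardEq (by rw [card_fiber, card_fiber, h])
  refine ⟨(Equiv.sigmaFiberEquiv t').symm.trans ((Equiv.sigmaCongrRight e).trans
    (Equiv.sigmaFiberEquiv t)), ?_⟩
  funext k
  simp only [Function.comp_apply, Equiv.trans_apply, Equiv.sigmaFiberEquiv,
    Equiv.sigmaCongrRight, Equiv.coe_fn_symm_mk, Equiv.coe_fn_mk]
  exact (e (t' k) ⟨k, rfl⟩).2

/-! ### Spanning -/

/-- Extend a 5-variable exponent vector by zero in the last slot. -/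
def extVec (m : Fin 5 →₀ ℕ) : Fin 6 → ℕ := Fin.lastCases 0 (fun i => m i)

lemma sum_extVec (m : Fin 5 →₀ ℕ) : ∑ j, extVec m j = m.sum fun _ e => e := by
  rw [Fin.sum_univ_castSucc]
  simp only [extVec, Fin.lastCases_last]; simp [Finsupp.sum_fintype]

lemma bernPoly_add (a b : Fin 6 → ℕ) :
    bernPoly (fun j => a j + b j) = bernPoly a * bernPoly b := by
  simp_rw [bernPoly_eq_prod, pow_add, Finset.prod_mul_distrib]

lemma bernPoly_extVec (m : Fin 5 →₀ ℕ) :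
    bernPoly (extVec m) = monomial m (1 : ℝ) := by
  rw [bernPoly_eq_prod, Fin.prod_univ_castSucc, monomial_eq, C_1, one_mul,
    Finsupp.prod_pow]
  simp only [extVec, Fin.lastCases_last]; simp [yb_castSucc]

lemma monomial_eq_sum_bern (r : ℕ) (m : Fin 5 →₀ ℕ) :
    (monomial m (1 : ℝ) : MvPolynomial (Fin 5) ℝ) =
      ∑ c : Fin (r - (m.sum fun _ e => e)) → Fin 6,
        bernPoly (fun j => extVec m j + countVec c j) := by
  simp_rw [bernPoly_add]
  rw [← Finset.mul_sum, ← one_eq_sum_bern, mul_one, bernPoly_extVec]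

lemma sum_ext_count (r : ℕ) (m : Fin 5 →₀ ℕ) (hm : (m.sum fun _ e => e) ≤ r)
    (c : Fin (r - (m.sum fun _ e => e)) → Fin 6) :
    ∑ j, (extVec m j + countVec c j) = r := by
  rw [Finset.sum_add_distrib, sum_extVec, sum_countVec]
  omega

lemma restrict_le_span (r : ℕ) :
    restrictTotalDegree (Fin 5) ℝ r ≤ Submodule.span ℝ
      (Set.range fun i : {n // n ∈ Finset.Nat.antidiagonalTuple 6 r} => bernPoly i.1) := by
  intro p hp
  rw [mem_restrictTotalDegree] at hp
  rw [← support_sum_monomial_coeff p]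
  refine Submodule.sum_mem _ fun m hms => ?_
  have hm : (m.sum fun _ e => e) ≤ r := le_trans (le_totalDegree hms) hp
  have : (monomial m (coeff m p) : MvPolynomial (Fin 5) ℝ)
      = coeff m p • monomial m (1 : ℝ) := by
    rw [smul_monomial, smul_eq_mul, mul_one]
  rw [this, monomial_eq_sum_bern r m]
  refine Submodule.smul_mem _ _ (Submodule.sum_mem _ fun c _ => Submodule.subset_span ?_)
  exact ⟨⟨_, (Finset.Nat.mem_antidiagonalTuple).2 (sum_ext_count r m hm c)⟩, rfl⟩

/-! ### Linear independence -/

lemma eval_yb (x : Fin 6 → ℝ) (hx : ∑ j, x j = 1) (j : Fin 6) :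
    eval (fun i : Fin 5 => x i.castSucc) (yb j) = x j := by
  induction j using Fin.lastCases with
  | last =>
      rw [yb_last]
      simp only [map_sub, map_one, map_sum, eval_X]
      rw [Fin.sum_univ_castSucc] at hx
      linarith
  | cast i => rw [yb_castSucc]; simp

lemma eval_bern_sum_one (u : (Fin 6 → ℕ) → ℝ) (r : ℕ)
    (h0 : ∑ n ∈ Finset.Nat.antidiagonalTuple 6 r, u n • bernPoly n = 0)
    (x : Fin 6 → ℝ) (hx : ∑ j, x j = 1) :
    ∑ n ∈ Finset.Nat.antidiagonalTuple 6 r, u n * ∏ j, x j ^ n j = 0 := by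
  have h := congrArg (eval fun i : Fin 5 => x i.castSucc) h0
  simp only [map_sum, map_zero] at h
  rw [← h]
  refine Finset.sum_congr rfl fun n hn => ?_
  rw [bernPoly_eq_prod, smul_eval, map_prod]
  simp_rw [map_pow]
  congr 1
  exact Finset.prod_congr rfl fun j _ => by rw [eval_yb x hx j]

lemma eval_bern_general (u : (Fin 6 → ℕ) → ℝ) (r : ℕ)
    (h1 : ∀ x : Fin 6 → ℝ, ∑ j, x j = 1 →
      ∑ n ∈ Finset.Nat.antidiagonalTuple 6 r, u n * ∏ j, x j ^ n j = 0)
    (x : Fin 6 → ℝ) (hs : ∑ j, x j ≠ 0) :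
    ∑ n ∈ Finset.Nat.antidiagonalTuple 6 r, u n * ∏ j, x j ^ n j = 0 := by
  set s := ∑ j, x j with hsdef
  have hsum1 : ∑ j, (s⁻¹ * x j) = 1 := by
    rw [← Finset.mul_sum, ← hsdef, inv_mul_cancel₀ hs]
  have key := h1 (fun j => s⁻¹ * x j) hsum1
  have expand : ∀ n ∈ Finset.Nat.antidiagonalTuple 6 r,
      u n * ∏ j, x j ^ n j = s ^ r * (u n * ∏ j, (s⁻¹ * x j) ^ n j) := by
    intro n hn
    have hnr : ∑ j, n j = r := (Finset.Nat.mem_antidiagonalTuple).1 hn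
    have : ∏ j, (s⁻¹ * x j) ^ n j = (s⁻¹) ^ r * ∏ j, x j ^ n j := by
      simp_rw [mul_pow, Finset.prod_mul_distrib, Finset.prod_pow_eq_pow_sum, hnr]
    rw [this]
    rw [← mul_assoc (s ^ r), mul_comm (s ^ r) (u n), mul_assoc, ← mul_assoc (s ^ r),
      ← mul_pow, mul_inv_cancel₀ hs, one_pow, one_mul]
  rw [Finset.sum_congr rfl expand, ← Finset.mul_sum, key, mul_zero]

lemma vanish_everywhere (u : (Fin 6 → ℕ) → ℝ) (r : ℕ)
    (h : ∀ x : Fin 6 → ℝ, ∑ j, x j ≠ 0 →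
      ∑ n ∈ Finset.Nat.antidiagonalTuple 6 r, u n * ∏ j, x j ^ n j = 0)
    (x : Fin 6 → ℝ) :
    ∑ n ∈ Finset.Nat.antidiagonalTuple 6 r, u n * ∏ j, x j ^ n j = 0 := by
  classical
  set q : Polynomial ℝ := ∑ n ∈ Finset.Nat.antidiagonalTuple 6 r,
    Polynomial.C (u n) * ∏ j, (Polynomial.C (x j) + Polynomial.X) ^ n j with hq
  have heval : ∀ t : ℝ, q.eval t =
      ∑ n ∈ Finset.Nat.antidiagonalTuple 6 r, u n * ∏ j, (x j + t) ^ n j := by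
    intro t
    simp [hq, Polynomial.eval_finset_sum, Polynomial.eval_prod]
  have hroots : {t : ℝ | t ≠ -(∑ j, x j) / 6} ⊆ {t | q.IsRoot t} := by
    intro t ht
    simp only [Set.mem_setOf_eq] at ht ⊢
    rw [Polynomial.IsRoot, heval]
    refine h _ ?_
    rw [Finset.sum_add_distrib, Finset.sum_const]
    simp only [Finset.card_univ, Fintype.card_fin, nsmul_eq_mul]
    intro hc
    apply ht
    push_cast at hc
    linarith
  have hq0 : q = 0 := Polynomial.eq_zero_of_infinite_isRoot q
    (Set.Infinite.mono hroots ((Set.finite_singleton _).infinite_compl))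
  have h0 := heval 0
  rw [hq0] at h0
  simp only [Polynomial.eval_zero] at h0
  simpa using h0.symm

lemma u_eq_zero (u : (Fin 6 → ℕ) → ℝ) (r : ℕ)
    (h : ∀ x : Fin 6 → ℝ,
      ∑ n ∈ Finset.Nat.antidiagonalTuple 6 r, u n * ∏ j, x j ^ n j = 0) :
    ∀ n ∈ Finset.Nat.antidiagonalTuple 6 r, u n = 0 := by
  classical
  intro n0 hn0
  set H : MvPolynomial (Fin 6) ℝ := ∑ n ∈ Finset.Nat.antidiagonalTuple 6 r,
    C (u n) * ∏ j, X j ^ n j with hH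
  have hH0 : H = 0 := by
    apply MvPolynomial.funext
    intro x
    simp only [hH, map_sum, map_mul, eval_C, map_prod, map_pow, eval_X, map_zero]
    exact h x
  have hcoeff := congrArg (coeff (Finsupp.equivFunOnFinite.symm n0)) hH0
  rw [hH] at hcoeff
  simp only [coeff_zero] at hcoeff
  rw [MvPolynomial.coeff_sum] at hcoeff
  have hmono : ∀ n : Fin 6 → ℕ, (C (u n) * ∏ j, X j ^ n j : MvPolynomial (Fin 6) ℝ)
      = monomial (Finsupp.equivFunOnFinite.symm n) (u n) := by
    intro n
    have : ∏ j : Fin 6, (X j : MvPolynomial (Fin 6) ℝ) ^ n j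
        = ∏ j : Fin 6, X j ^ (Finsupp.equivFunOnFinite.symm n) j := rfl
    rw [this, ← Finsupp.prod_pow, ← MvPolynomial.monomial_eq]
  simp_rw [hmono, coeff_monomial, EmbeddingLike.apply_eq_iff_eq] at hcoeff
  rwa [Finset.sum_ite_eq' (Finset.Nat.antidiagonalTuple 6 r) n0 u, if_pos hn0] at hcoeff

lemma bern_indep (u : (Fin 6 → ℕ) → ℝ) (r : ℕ)
    (h0 : ∑ n ∈ Finset.Nat.antidiagonalTuple 6 r, u n • bernPoly n = 0) :
    ∀ n ∈ Finset.Nat.antidiagonalTuple 6 r, u n = 0 :=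
  u_eq_zero u r (vanish_everywhere u r
    (eval_bern_general u r (eval_bern_sum_one u r h0)))

/-! ### The Bernstein basis -/

lemma bernPoly_mem_of_antidiag {r : ℕ} {n : Fin 6 → ℕ}
    (hn : n ∈ Finset.Nat.antidiagonalTuple 6 r) :
    bernPoly n ∈ restrictTotalDegree (Fin 5) ℝ r := by
  rw [mem_restrictTotalDegree]
  exact le_trans (totalDegree_bernstein_le n)
    (le_of_eq (Finset.Nat.mem_antidiagonalTuple.1 hn))

noncomputable def bFam (r : ℕ) :
    {n // n ∈ Finset.Nat.antidiagonalTuple 6 r} → restrictTotalDegree (Fin 5) ℝ r :=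
  fun n => ⟨bernPoly n.1, bernPoly_mem_of_antidiag n.2⟩

lemma bFam_indep (r : ℕ) : LinearIndependent ℝ (bFam r) := by
  classical
  rw [Fintype.linearIndependent_iff]
  intro g hg i0
  set u : (Fin 6 → ℕ) → ℝ := fun n =>
    if h : n ∈ Finset.Nat.antidiagonalTuple 6 r then g ⟨n, h⟩ else 0 with hu
  have hamb : ∑ n ∈ Finset.Nat.antidiagonalTuple 6 r, u n • bernPoly n = 0 := by
    have := congrArg (Subtype.val) hg
    simp only [Submodule.coe_sum, SetLike.val_smul, ZeroMemClass.coe_zero] at this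
    rw [← Finset.sum_coe_sort (Finset.Nat.antidiagonalTuple 6 r)
      (fun n => u n • bernPoly n)]
    rw [← this]
    refine Finset.sum_congr rfl fun i _ => ?_
    simp only [hu, dif_pos i.2, bFam]
  have := bern_indep u r hamb i0.1 i0.2
  simpa only [hu, dif_pos i0.2] using this

lemma bFam_span (r : ℕ) :
    ⊤ ≤ Submodule.span ℝ (Set.range (bFam r)) := by
  rintro ⟨p, hp⟩ -
  have h1 := restrict_le_span r hp
  rw [Submodule.mem_span_range_iff_exists_fun] at h1
  obtain ⟨c, hc⟩ := h1
  rw [Submodule.mem_span_range_iff_exists_fun]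
  refine ⟨c, Subtype.ext ?_⟩
  simpa only [Submodule.coe_sum, SetLike.val_smul, bFam] using hc

noncomputable def bernBasis (r : ℕ) :
    Module.Basis {n // n ∈ Finset.Nat.antidiagonalTuple 6 r} ℝ
      (restrictTotalDegree (Fin 5) ℝ r) :=
  Module.Basis.mk (bFam_indep r) (bFam_span r)


/-- **Quasi-expectation representation of finite exchangeability**
(Proposition 3): every finitely exchangeable probability mass function on
`r` rolls of a six-sided die is represented by a linear functional on the
polynomials of degree at most `r` dominating the Bernstein-cone lower bound. -/
theorem finite_exchangeable_quasiExpectation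
    (r : ℕ) (hr : 1 ≤ r) (P : (Fin r → Fin 6) → ℝ)
    (hPnonneg : ∀ t, 0 ≤ P t) (hPsum : ∑ t, P t = 1)
    (hPexch : ∀ (σ : Equiv.Perm (Fin r)) (t : Fin r → Fin 6), P (t ∘ σ) = P t) :
    ∃ L : (restrictTotalDegree (Fin 5) ℝ r) →ₗ[ℝ] ℝ,
      (∀ (g : restrictTotalDegree (Fin 5) ℝ r) (c : ℝ),
          ((g : MvPolynomial (Fin 5) ℝ) - C c) ∈ bernCone r → c ≤ L g) ∧
      (∀ t : Fin r → Fin 6,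
          P t = L ⟨bernPoly (countVec t), bernPoly_countVec_mem t⟩) := by
  classical
  -- the weight function
  set f : (Fin 6 → ℕ) → ℝ := fun n =>
    (∑ t ∈ Finset.univ.filter (fun t : Fin r → Fin 6 => countVec t = n), P t) /
      ((Finset.univ.filter (fun t : Fin r → Fin 6 => countVec t = n)).card) with hf
  have hf_nonneg : ∀ n, 0 ≤ f n := fun n =>
    div_nonneg (Finset.sum_nonneg fun t _ => hPnonneg t) (Nat.cast_nonneg _)
  have hf_eval : ∀ t : Fin r → Fin 6, f (countVec t) = P t := by
    intro t
    have hconst : ∀ t' ∈ Finset.univ.filter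
        (fun t' : Fin r → Fin 6 => countVec t' = countVec t), P t' = P t := by
      intro t' ht'
      obtain ⟨σ, hσ⟩ := exists_perm_of_countVec_eq t t'
        ((Finset.mem_filter.mp ht').2).symm
      rw [← hσ, hPexch σ t]
    have hmem : t ∈ Finset.univ.filter
        (fun t' : Fin r → Fin 6 => countVec t' = countVec t) :=
      Finset.mem_filter.mpr ⟨Finset.mem_univ t, rfl⟩
    have hcard : (0 : ℝ) < (Finset.univ.filter
        (fun t' : Fin r → Fin 6 => countVec t' = countVec t)).card := by
      have := Finset.card_pos.mpr ⟨t, hmem⟩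
      exact_mod_cast this
    rw [hf]
    simp only
    rw [Finset.sum_congr rfl hconst, Finset.sum_const, nsmul_eq_mul]
    field_simp
  -- the linear functional
  set L : (restrictTotalDegree (Fin 5) ℝ r) →ₗ[ℝ] ℝ :=
    (bernBasis r).constr ℝ (fun i => f i.1) with hL
  have hLbern : ∀ (n : Fin 6 → ℕ) (hn : n ∈ Finset.Nat.antidiagonalTuple 6 r)
      (hmem : bernPoly n ∈ restrictTotalDegree (Fin 5) ℝ r),
      L ⟨bernPoly n, hmem⟩ = f n := by
    intro n hn hmem
    have h1 : (⟨bernPoly n, hmem⟩ : restrictTotalDegree (Fin 5) ℝ r)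
        = bFam r ⟨n, hn⟩ := rfl
    rw [h1, hL]
    have h2 : bFam r ⟨n, hn⟩ = bernBasis r ⟨n, hn⟩ := by
      rw [bernBasis, Module.Basis.mk_apply]
    rw [h2, Module.Basis.constr_basis]
  have hcv_mem : ∀ t : Fin r → Fin 6,
      countVec t ∈ Finset.Nat.antidiagonalTuple 6 r :=
    fun t => Finset.Nat.mem_antidiagonalTuple.2 (sum_countVec t)
  have hLcv : ∀ t : Fin r → Fin 6,
      L ⟨bernPoly (countVec t), bernPoly_countVec_mem t⟩ = P t := by
    intro t
    rw [hLbern (countVec t) (hcv_mem t), hf_eval]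
  refine ⟨L, ?_, fun t => (hLcv t).symm⟩
  intro g c hcone
  obtain ⟨u, hu_nonneg, hu_eq⟩ := hcone
  -- decompose g inside the submodule
  set E : restrictTotalDegree (Fin 5) ℝ r :=
    ∑ t : Fin r → Fin 6, ⟨bernPoly (countVec t), bernPoly_countVec_mem t⟩ with hE
  set S2 : restrictTotalDegree (Fin 5) ℝ r :=
    ∑ i : {n // n ∈ Finset.Nat.antidiagonalTuple 6 r},
      u i.1 • (⟨bernPoly i.1, bernPoly_mem_of_antidiag i.2⟩ :
        restrictTotalDegree (Fin 5) ℝ r) with hS2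
  have hdecomp : g = c • E + S2 := by
    apply Subtype.ext
    have hcoeE : (E : MvPolynomial (Fin 5) ℝ)
        = ∑ t : Fin r → Fin 6, bernPoly (countVec t) := by
      rw [hE]; simp [Submodule.coe_sum]
    have hcoeS : (S2 : MvPolynomial (Fin 5) ℝ)
        = ∑ n ∈ Finset.Nat.antidiagonalTuple 6 r, u n • bernPoly n := by
      rw [hS2]
      rw [← Finset.sum_coe_sort (Finset.Nat.antidiagonalTuple 6 r)
        (fun n => u n • bernPoly n)]
      simp [Submodule.coe_sum]
    show (g : MvPolynomial (Fin 5) ℝ) = ((c • E + S2 : restrictTotalDegree (Fin 5) ℝ r) :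
      MvPolynomial (Fin 5) ℝ)
    rw [Submodule.coe_add, SetLike.val_smul, hcoeE, hcoeS, ← one_eq_sum_bern r, ← hu_eq]
    rw [smul_eq_C_mul, mul_one]
    ring
  have hLE : L E = 1 := by
    rw [hE, map_sum]
    have : ∀ t : Fin r → Fin 6,
        L ⟨bernPoly (countVec t), bernPoly_countVec_mem t⟩ = P t := hLcv
    rw [Finset.sum_congr rfl fun t _ => this t]
    exact hPsum
  have hLS2 : 0 ≤ L S2 := by
    rw [hS2, map_sum]
    refine Finset.sum_nonneg fun i _ => ?_
    rw [map_smul, smul_eq_mul,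
      hLbern i.1 i.2 (bernPoly_mem_of_antidiag i.2)]
    exact mul_nonneg (hu_nonneg i.1) (hf_nonneg i.1)
  rw [hdecomp, map_add, map_smul, smul_eq_mul, hLE, mul_one]
  linarith
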